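/- Let K be a commutative ring, A a unital K-algebra, Δ ∈ A a well-tempered element, and B = Â_Δ the unital homotope. Let V be a left B-module which is B⁺-trivial, i.e. B⁺·V = 0. Then: (i) every homomorphism of left B-modules from B⁺ to V is zero, i.e. Hom_B(B⁺, V) = 0; (ii) B⁺ ⊗_B V = 0. -/

import Mathlib

open scoped TensorProduct

noncomputable section

universe u v

/-! ### The homotope of an algebra at an element -/

variable (K : Type v) [CommRing K] (A : Type u) [Ring A] [Algebra K A]

/-- The (non-unital) homotope of a ring `A` at an element `Δ`: the same underlying
additive group, with multiplication `a ∘ b = a * Δ * b`. -/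
@[ext]
structure Homotope {A : Type u} [Ring A] (Δ : A) : Type u where
  /-- the underlying element of `A` -/
  val : A

namespace Homotope

variable {A} (Δ : A)

theorem val_injective : Function.Injective (Homotope.val (Δ := Δ)) := fun a b h => by
  cases a; cases b; cases h; rfl

instance : Zero (Homotope Δ) := ⟨⟨0⟩⟩
instance : Add (Homotope Δ) := ⟨fun x y => ⟨x.val + y.val⟩⟩
instance : Neg (Homotope Δ) := ⟨fun x => ⟨-x.val⟩⟩
instance : Sub (Homotope Δ) := ⟨fun x y => ⟨x.val - y.val⟩⟩
instance : SMul ℕ (Homotope Δ) := ⟨fun n x => ⟨n • x.val⟩⟩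
instance : SMul ℤ (Homotope Δ) := ⟨fun n x => ⟨n • x.val⟩⟩
instance : Mul (Homotope Δ) := ⟨fun x y => ⟨x.val * Δ * y.val⟩⟩
instance : SMul K (Homotope Δ) := ⟨fun k x => ⟨k • x.val⟩⟩

@[simp] theorem zero_val : (0 : Homotope Δ).val = 0 := rfl
@[simp] theorem add_val (x y : Homotope Δ) : (x + y).val = x.val + y.val := rfl
@[simp] theorem neg_val (x : Homotope Δ) : (-x).val = -x.val := rfl
@[simp] theorem sub_val (x y : Homotope Δ) : (x - y).val = x.val - y.val := rfl
@[simp] theorem mul_val (x y : Homotope Δ) : (x * y).val = x.val * Δ * y.val := rfl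
@[simp] theorem smul_val (k : K) (x : Homotope Δ) : (k • x).val = k • x.val := rfl

instance : AddCommGroup (Homotope Δ) :=
  (val_injective Δ).addCommGroup Homotope.val rfl (fun _ _ => rfl) (fun _ => rfl)
    (fun _ _ => rfl) (fun _ _ => rfl) (fun _ _ => rfl)

instance : NonUnitalRing (Homotope Δ) :=
  { (inferInstance : AddCommGroup (Homotope Δ)),
    (inferInstance : Mul (Homotope Δ)) with
    left_distrib := fun x y z => by ext; simp [mul_add]
    right_distrib := fun x y z => by ext; simp [add_mul]
    zero_mul := fun x => by ext; simp
    mul_zero := fun x => by ext; simp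
    mul_assoc := fun x y z => by ext; simp [mul_assoc] }

/-- the projection to `A` as an additive map -/
def valAddHom : Homotope Δ →+ A :=
  { toFun := Homotope.val, map_zero' := rfl, map_add' := fun _ _ => rfl }

instance : Module K (Homotope Δ) :=
  (val_injective Δ).module K (valAddHom Δ) (fun _ _ => rfl)

instance : IsScalarTower K (Homotope Δ) (Homotope Δ) :=
  ⟨fun k x y => by ext; simp [smul_mul_assoc]⟩

instance : SMulCommClass K (Homotope Δ) (Homotope Δ) :=
  ⟨fun k x y => by ext; simp [mul_smul_comm]⟩

end Homotope

/-- The unital homotope of `A` at `Δ`, obtained from the non-unital homotope by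
adjoining a unit: `B = K·1 ⊕ A_Δ`. -/
abbrev UnitalHomotope (Δ : A) : Type _ := Unitization K (Homotope Δ)

namespace UnitalHomotope

variable (Δ : A)

/-- The non-unital algebra map `A_Δ → A`, `a ↦ a·Δ`. -/
def phi1 : Homotope Δ →ₙₐ[K] A :=
  { toFun := fun x => x.val * Δ
    map_smul' := fun k x => smul_mul_assoc k x.val Δ
    map_zero' := zero_mul Δ
    map_add' := fun x y => add_mul x.val y.val Δ
    map_mul' := fun x y => mul_assoc (x.val * Δ) y.val Δ }

/-- The non-unital algebra map `A_Δ → A`, `a ↦ Δ·a`. -/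
def phi2 : Homotope Δ →ₙₐ[K] A :=
  { toFun := fun x => Δ * x.val
    map_smul' := fun k x => mul_smul_comm k Δ x.val
    map_zero' := mul_zero Δ
    map_add' := fun x y => mul_add Δ x.val y.val
    map_mul' := fun x y => by
      show Δ * (x.val * Δ * y.val) = Δ * x.val * (Δ * y.val)
      simp [mul_assoc] }

/-- The algebra homomorphism `ψ₁ : B → A`, determined by `a ↦ a·Δ` on `B⁺ = A`. -/
def psi1 : UnitalHomotope K A Δ →ₐ[K] A := Unitization.lift (phi1 K A Δ)

/-- The algebra homomorphism `ψ₂ : B → A`, determined by `a ↦ Δ·a` on `B⁺ = A`. -/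
def psi2 : UnitalHomotope K A Δ →ₐ[K] A := Unitization.lift (phi2 K A Δ)

/-- The augmentation `B → K` of the unital homotope. -/
def aug : UnitalHomotope K A Δ →ₐ[K] K := Unitization.fstHom K (Homotope Δ)

/-- The augmentation ideal `B⁺ ⊆ B`, as a left ideal (hence a left `B`-module). -/
def plusLeft : Ideal (UnitalHomotope K A Δ) := RingHom.ker (aug K A Δ).toRingHom

/-- The augmentation, as a ring homomorphism on the opposite algebra. -/
def augOp : (UnitalHomotope K A Δ)ᵐᵒᵖ →+* K :=
  RingHom.fromOpposite (aug K A Δ).toRingHom (fun x y => Commute.all _ _)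

/-- The augmentation ideal `B⁺`, as a left ideal of `Bᵐᵒᵖ`, i.e. as a right `B`-module. -/
def plusRight : Ideal (UnitalHomotope K A Δ)ᵐᵒᵖ := RingHom.ker (augOp K A Δ)

end UnitalHomotope

open UnitalHomotope

/-- An element `Δ` of a `K`-algebra `A` is *well-tempered* if the two-sided ideal
generated by `Δ` is all of `A`, and the augmentation ideal `B⁺` of the unital homotope
`B = Â_Δ` is projective both as a left and as a right `B`-module. -/
def WellTempered (Δ : A) : Prop :=
  TwoSidedIdeal.span ({Δ} : Set A) = ⊤ ∧
    Module.Projective (UnitalHomotope K A Δ) (plusLeft K A Δ) ∧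
    Module.Projective (UnitalHomotope K A Δ)ᵐᵒᵖ (plusRight K A Δ)

namespace UnitalHomotope

variable {A} (Δ : A)

/-- `A` as a left module over the unital homotope `B = Â_Δ`, via `ψ₁`. -/
instance instModulePsi1 : Module (UnitalHomotope K A Δ) A :=
  Module.compHom A (psi1 K A Δ).toRingHom

theorem smul_def (b : UnitalHomotope K A Δ) (a : A) : b • a = psi1 K A Δ b * a := rfl

instance : SMulCommClass (UnitalHomotope K A Δ) K A :=
  ⟨fun b k a => mul_smul_comm k (psi1 K A Δ b) a⟩

instance : SMulCommClass K (UnitalHomotope K A Δ) A :=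
  ⟨fun k b a => (mul_smul_comm k (psi1 K A Δ b) a).symm⟩

instance : IsScalarTower K (UnitalHomotope K A Δ) A :=
  ⟨fun k b a => by
    rw [smul_def, smul_def, map_smul, smul_mul_assoc]⟩

end UnitalHomotope

end


open Pointwise Set in
theorem aux_mem_closure {A : Type*} [Ring A] {Δ : A}
    (h : TwoSidedIdeal.span ({Δ} : Set A) = ⊤) (a : A) :
    a ∈ AddSubgroup.closure {y : A | ∃ x z : A, y = x * Δ * z} := by
  have ha : a ∈ TwoSidedIdeal.span ({Δ} : Set A) := h ▸ trivial
  rw [TwoSidedIdeal.mem_span_iff_mem_addSubgroup_closure] at ha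
  refine AddSubgroup.closure_mono ?_ ha
  rintro y ⟨w, ⟨x, -, d, hd, rfl⟩, z, -, rfl⟩
  rw [Set.mem_singleton_iff] at hd
  exact ⟨x, z, by rw [hd]⟩

open UnitalHomotope in
/-- Let `Δ` be well-tempered and `V` a `B⁺`-trivial left `B`-module.  Then
(i) every `B`-module homomorphism `B⁺ → V` is zero, and (ii) `B⁺ ⊗_B V = 0`; since
`B = K·1 ⊕ B⁺`, the tensor product `B⁺ ⊗_B V` is the quotient of `B⁺ ⊗_K V` by the span of
the elements `(x·b) ⊗ v - x ⊗ (b·v)` (`x, b ∈ B⁺`, `v ∈ V`), so (ii) says this span is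
everything. -/
theorem trivial_module_hom_and_tensor {K : Type v} [CommRing K] {A : Type u} [Ring A]
    [Algebra K A] (Δ : A) (h : WellTempered K A Δ)
    (V : Type w) [AddCommGroup V] [Module K V] [Module (UnitalHomotope K A Δ) V]
    [IsScalarTower K (UnitalHomotope K A Δ) V]
    (hV : ∀ (b : Homotope Δ) (v : V), (Unitization.inr b : UnitalHomotope K A Δ) • v = 0) :
    (∀ f : (plusLeft K A Δ) →ₗ[UnitalHomotope K A Δ] V, f = 0) ∧
      Submodule.span K {z : Homotope Δ ⊗[K] V | ∃ (x b : Homotope Δ) (v : V),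
          z = (x * b) ⊗ₜ[K] v - x ⊗ₜ[K] ((Unitization.inr b : UnitalHomotope K A Δ) • v)} =
        ⊤ := by
  have hmem : ∀ a : Homotope Δ, (Unitization.inr a : UnitalHomotope K A Δ) ∈ plusLeft K A Δ := by
    intro a
    show aug K A Δ (Unitization.inr a) = 0
    simp [aug]
  constructor
  · intro f
    ext ξ
    set elt : Homotope Δ → plusLeft K A Δ := fun a => ⟨Unitization.inr a, hmem a⟩ with helt
    have key : ∀ a : Homotope Δ, f (elt a) = 0 := by
      intro a
      obtain ⟨c⟩ := a
      have hc := aux_mem_closure h.1 c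
      refine AddSubgroup.closure_induction (p := fun c _ => f (elt ⟨c⟩) = 0) ?_ ?_ ?_ ?_ hc
      · rintro y ⟨x, z, rfl⟩
        have : elt ⟨x * Δ * z⟩ =
            ((Unitization.inr (⟨x⟩ : Homotope Δ) : UnitalHomotope K A Δ)) • elt ⟨z⟩ := by
          apply Subtype.ext
          show (Unitization.inr (⟨x * Δ * z⟩ : Homotope Δ) : UnitalHomotope K A Δ) =
            Unitization.inr (⟨x⟩ : Homotope Δ) * Unitization.inr (⟨z⟩ : Homotope Δ)
          rw [← Unitization.inr_mul]
          rfl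
        rw [this, map_smul, hV]
      · show f (elt ⟨0⟩) = 0
        have : elt ⟨0⟩ = 0 := Subtype.ext (by simp [helt]; rfl)
        rw [this, map_zero]
      · intro x y _ _ hx hy
        show f (elt ⟨x + y⟩) = 0
        have : elt ⟨x + y⟩ = elt ⟨x⟩ + elt ⟨y⟩ := by
          apply Subtype.ext
          show (Unitization.inr ((⟨x⟩ : Homotope Δ) + ⟨y⟩) : UnitalHomotope K A Δ) = _
          rw [Unitization.inr_add]; rfl
        rw [this, map_add, hx, hy, add_zero]
      · intro x _ hx
        show f (elt ⟨-x⟩) = 0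
        have : elt ⟨-x⟩ = - elt ⟨x⟩ := by
          apply Subtype.ext
          show (Unitization.inr (-(⟨x⟩ : Homotope Δ)) : UnitalHomotope K A Δ) = _
          rw [Unitization.inr_neg]; rfl
        rw [this, map_neg, hx, neg_zero]
    have hξ : ξ = elt ξ.1.snd := by
      apply Subtype.ext
      have h0 : (ξ : UnitalHomotope K A Δ).fst = 0 := ξ.2
      exact (Unitization.ext (by simp [helt, h0]) (by simp [helt])).symm
    rw [hξ, key]
    rfl
  · rw [eq_top_iff]
    rintro t -
    induction t using TensorProduct.induction_on with
    | zero => exact Submodule.zero_mem _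
    | add s t hs ht => exact Submodule.add_mem _ hs ht
    | tmul a v =>
      obtain ⟨c⟩ := a
      have hc := aux_mem_closure h.1 c
      refine AddSubgroup.closure_induction
        (p := fun c _ => (⟨c⟩ : Homotope Δ) ⊗ₜ[K] v ∈ Submodule.span K
          {z : Homotope Δ ⊗[K] V | ∃ (x b : Homotope Δ) (v : V),
            z = (x * b) ⊗ₜ[K] v - x ⊗ₜ[K] ((Unitization.inr b : UnitalHomotope K A Δ) • v)})
        ?_ ?_ ?_ ?_ hc
      · rintro y ⟨x, z, rfl⟩
        refine Submodule.subset_span ⟨⟨x⟩, ⟨z⟩, v, ?_⟩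
        rw [hV, TensorProduct.tmul_zero, sub_zero]
        rfl
      · show (⟨0⟩ : Homotope Δ) ⊗ₜ[K] v ∈ _
        have : ((⟨0⟩ : Homotope Δ) : Homotope Δ) ⊗ₜ[K] v = 0 := by
          rw [show (⟨0⟩ : Homotope Δ) = 0 from rfl, TensorProduct.zero_tmul]
        rw [this]; exact Submodule.zero_mem _
      · intro x y _ _ hx hy
        show (⟨x + y⟩ : Homotope Δ) ⊗ₜ[K] v ∈ _
        have : ((⟨x + y⟩ : Homotope Δ) : Homotope Δ) ⊗ₜ[K] v
            = (⟨x⟩ : Homotope Δ) ⊗ₜ[K] v + (⟨y⟩ : Homotope Δ) ⊗ₜ[K] v := by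
          rw [show (⟨x + y⟩ : Homotope Δ) = ⟨x⟩ + ⟨y⟩ from rfl, TensorProduct.add_tmul]
        rw [this]; exact Submodule.add_mem _ hx hy
      · intro x _ hx
        show (⟨-x⟩ : Homotope Δ) ⊗ₜ[K] v ∈ _
        have : ((⟨-x⟩ : Homotope Δ) : Homotope Δ) ⊗ₜ[K] v = -((⟨x⟩ : Homotope Δ) ⊗ₜ[K] v) := by
          rw [show (⟨-x⟩ : Homotope Δ) = -(⟨x⟩ : Homotope Δ) from rfl, TensorProduct.neg_tmul]
        rw [this]; exact Submodule.neg_mem _ hx
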